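/- Let ℱ₁, ℱ₂, ℱ₃, ℱ₄ be sub-σ-fields of a probability space (Ω, ℱ, P). If ℱ₁ and ℱ₃ are conditionally independent given ℱ₂, and ℱ₁ ∨ ℱ₂ and ℱ₄ are conditionally independent given ℱ₃, then ℱ₁ and ℱ₃ ∨ ℱ₄ are conditionally independent given ℱ₂. -/

import Mathlib

open MeasureTheory ProbabilityTheory Set
open scoped ENNReal

noncomputable section

namespace SetIndexedMarkov

variable {T : Type*} [TopologicalSpace T] {Ω : Type*} [mΩ : MeasurableSpace Ω]

/-- `𝒜(u)`: the collection of all finite unions of sets in `𝒜`. -/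
def Au (𝒜 : Set (Set T)) : Set (Set T) :=
  {B | ∃ s : Finset (Set T), ↑s ⊆ 𝒜 ∧ s.Nonempty ∧ B = ⋃₀ ↑s}

/-- `𝒞`: the collection of all sets of the form `A \ B` with `A ∈ 𝒜`, `B ∈ 𝒜(u)`. -/
def CC (𝒜 : Set (Set T)) : Set (Set T) :=
  {C | ∃ A ∈ 𝒜, ∃ B ∈ Au 𝒜, C = A \ B}

/-- `∅' := ⋂ {A ∈ 𝒜 : A ≠ ∅}`, the minimal set of `𝒜`. -/
def emptyPrime (𝒜 : Set (Set T)) : Set T := ⋂₀ {A ∈ 𝒜 | A ≠ ∅}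

/-- The standing structural assumptions on the indexing collection `𝒜`: a semilattice of
closed subsets of the compact Hausdorff space `T`, containing `∅` and `T`, closed under
arbitrary (nonempty) intersections, and containing no two disjoint nonempty sets. -/
structure IsIndexing (𝒜 : Set (Set T)) : Prop where
  closed : ∀ A ∈ 𝒜, IsClosed A
  empty_mem : ∅ ∈ 𝒜
  univ_mem : Set.univ ∈ 𝒜
  sInter_mem : ∀ S ⊆ 𝒜, S.Nonempty → ⋂₀ S ∈ 𝒜
  no_disjoint : ∀ A ∈ 𝒜, ∀ B ∈ 𝒜, A.Nonempty → B.Nonempty → (A ∩ B).Nonempty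

/-- The σ-field generated by a real random variable. -/
def sigOf (f : Ω → ℝ) : MeasurableSpace Ω := MeasurableSpace.comap f inferInstance

/-- The minimal filtration `ℱ_B = σ(X_A : A ∈ 𝒜, A ⊆ B)`. -/
def filt (𝒜 : Set (Set T)) (X : Set T → Ω → ℝ) (B : Set T) : MeasurableSpace Ω :=
  ⨆ A ∈ {A | A ∈ 𝒜 ∧ A ⊆ B}, sigOf (X A)

/-- `G` and `H` are conditionally independent given `K` (under `P`):
`E[1_G 1_H | K] = E[1_G | K] ⬝ E[1_H | K]` a.s. for all `G`-, `H`-measurable sets. -/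
def CondIndepGiven (P : Measure Ω) (G H K : MeasurableSpace Ω) : Prop :=
  ∀ g h : Set Ω, MeasurableSet[G] g → MeasurableSet[H] h →
    (P[((g ∩ h).indicator fun _ => (1 : ℝ)) | K]) =ᵐ[P]
      fun ω => (P[(g.indicator fun _ => (1 : ℝ)) | K]) ω *
        (P[(h.indicator fun _ => (1 : ℝ)) | K]) ω

/-- Every `X_B`, `B ∈ 𝒜(u)`, is a (measurable) random variable. -/
def MeasOnAu (𝒜 : Set (Set T)) (X : Set T → Ω → ℝ) : Prop :=
  ∀ B ∈ Au 𝒜, Measurable (X B)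

/-- The process `X` (viewed on `𝒜(u)`) is almost surely finitely additive, i.e. it is the
(a.s. unique) additive extension of its restriction to `𝒜`: it vanishes a.s. at `∅` and is
a.s. modular on the lattice `𝒜(u)`. -/
def AddExtension (𝒜 : Set (Set T)) (P : Measure Ω) (X : Set T → Ω → ℝ) : Prop :=
  (∀ᵐ ω ∂P, X ∅ ω = 0) ∧
    ∀ B ∈ Au 𝒜, ∀ B' ∈ Au 𝒜,
      ∀ᵐ ω ∂P, X (B ∪ B') ω + X (B ∩ B') ω = X B ω + X B' ω

/-- `X` is set-Markov: for all `A ∈ 𝒜`, `B ∈ 𝒜(u)`, `ℱ_B ⟂ σ(X_{A∖B}) | σ(X_B)`,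
where `X_{A∖B} = X_{A∪B} - X_B`. -/
def SetMarkov (𝒜 : Set (Set T)) (P : Measure Ω) (X : Set T → Ω → ℝ) : Prop :=
  ∀ A ∈ 𝒜, ∀ B ∈ Au 𝒜,
    CondIndepGiven P (filt 𝒜 X B) (sigOf fun ω => X (A ∪ B) ω - X B ω) (sigOf (X B))

/-- A flow: an increasing map `f : [0,a] → 𝒜(u)`. -/
def IsFlow (𝒜 : Set (Set T)) (a : ℝ) (f : ℝ → Set T) : Prop :=
  (∀ t ∈ Set.Icc (0 : ℝ) a, f t ∈ Au 𝒜) ∧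
    ∀ s t : ℝ, 0 ≤ s → s ≤ t → t ≤ a → f s ⊆ f t

/-- A continuous flow. -/
def IsContinuousFlow (𝒜 : Set (Set T)) (a : ℝ) (f : ℝ → Set T) : Prop :=
  IsFlow 𝒜 a f ∧
    (∀ t ∈ Set.Icc (0 : ℝ) a, ∀ u : ℕ → ℝ, (∀ n, u n ∈ Set.Icc t a) → Antitone u →
      Filter.Tendsto u Filter.atTop (nhds t) → f t = ⋂ n, f (u n)) ∧
    (∀ t ∈ Set.Icc (0 : ℝ) a, ∀ u : ℕ → ℝ, (∀ n, u n ∈ Set.Icc 0 t) → Monotone u →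
      Filter.Tendsto u Filter.atTop (nhds t) → f t = closure (⋃ n, f (u n)))

/-- A simple flow: a continuous flow starting at `∅'` which is piecewise `𝒜`-valued. -/
def IsSimpleFlow (𝒜 : Set (Set T)) (a : ℝ) (f : ℝ → Set T) : Prop :=
  IsContinuousFlow 𝒜 a f ∧ f 0 = emptyPrime 𝒜 ∧
    ∃ (n : ℕ) (t : ℕ → ℝ) (g : ℕ → ℝ → Set T),
      0 < n ∧ t 0 = 0 ∧ t n = a ∧ (∀ i < n, t i < t (i + 1)) ∧
      (∀ i < n, ∀ s ∈ Set.Icc (t i) (t (i + 1)), g (i + 1) s ∈ 𝒜) ∧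
      (∀ i < n, ∀ s u : ℝ, t i ≤ s → s ≤ u → u ≤ t (i + 1) → g (i + 1) s ⊆ g (i + 1) u) ∧
      (∀ i < n, ∀ s ∈ Set.Icc (t i) (t (i + 1)),
        f s = (⋃ j ∈ Finset.Icc 1 i, g j (t j)) ∪ g (i + 1) s)

/-- A finite sub-semilattice of `𝒜`: a finite nonempty subfamily closed under intersection. -/
def IsSubSemilattice (𝒜 : Set (Set T)) (L : Finset (Set T)) : Prop :=
  ↑L ⊆ 𝒜 ∧ L.Nonempty ∧ ∀ A ∈ L, ∀ B ∈ L, A ∩ B ∈ L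

/-- A consistent ordering `{A₀ = ∅', A₁, …, Aₙ}` of the finite sub-semilattice `L`. -/
structure ConsistentOrdering (𝒜 : Set (Set T)) (L : Finset (Set T)) (n : ℕ)
    (A : ℕ → Set T) : Prop where
  zero : A 0 = emptyPrime 𝒜
  first : A 1 = ⋂₀ ↑L
  mem : ∀ i, 1 ≤ i → i ≤ n → A i ∈ L
  inj : ∀ i j, 1 ≤ i → i ≤ n → 1 ≤ j → j ≤ n → A i = A j → i = j
  surj : ∀ B ∈ L, ∃ i, 1 ≤ i ∧ i ≤ n ∧ A i = B
  consistent : ∀ i, 1 ≤ i → i ≤ n → ∀ B ∈ L, B ⊆ A i → B ≠ A i → ∃ j < i, A j = B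

/-- `⋃_{j=1}^{i} A_j`. -/
def Uu (A : ℕ → Set T) (i : ℕ) : Set T := ⋃ j ∈ Finset.Icc 1 i, A j

/-- `⋃_{j=0}^{i} A_j`. -/
def U0 (A : ℕ → Set T) (i : ℕ) : Set T := ⋃ j ∈ Finset.range (i + 1), A j

/-- The left neighbourhood `C_j = A_j ∖ ⋃_{l=0}^{j-1} A_l`. -/
def leftNbhd (A : ℕ → Set T) (j : ℕ) : Set T := A j \ ⋃ l ∈ Finset.range j, A l

/-- A (set-indexed) transition system `𝒬 = (Q_{BB'})_{B ⊆ B'}`. -/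
def IsTransitionSystem (𝒜 : Set (Set T)) (Q : Set T → Set T → Kernel ℝ ℝ) : Prop :=
  (∀ B ∈ Au 𝒜, ∀ B' ∈ Au 𝒜, B ⊆ B' → IsMarkovKernel (Q B B')) ∧
    (∀ B ∈ Au 𝒜, ∀ x : ℝ, Q B B x = Measure.dirac x) ∧
    (∀ B ∈ Au 𝒜, ∀ B' ∈ Au 𝒜, ∀ B'' ∈ Au 𝒜, B ⊆ B' → B' ⊆ B'' →
      ∀ (x : ℝ) (Γ : Set ℝ), MeasurableSet Γ →
        Q B B'' x Γ = ∫⁻ y, Q B' B'' y Γ ∂(Q B B' x))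

/-- `X` is `𝒬`-Markov: `P[X_{B'} ∈ Γ | ℱ_B] = Q_{BB'}(X_B; Γ)` a.s. -/
def QMarkov (𝒜 : Set (Set T)) (P : Measure Ω) (X : Set T → Ω → ℝ)
    (Q : Set T → Set T → Kernel ℝ ℝ) : Prop :=
  ∀ B ∈ Au 𝒜, ∀ B' ∈ Au 𝒜, B ⊆ B' → ∀ Γ : Set ℝ, MeasurableSet Γ →
    (P[fun ω => Γ.indicator (fun _ => (1 : ℝ)) (X B' ω) | filt 𝒜 X B]) =ᵐ[P]
      fun ω => (Q B B' (X B ω) Γ).toReal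

/-- Iterated integration of the coordinates `i+1, …, i+m` of a path, each coordinate `j+1`
being integrated with respect to the kernel `κ j` applied at the coordinate `j`. -/
def stepInt (κ : ℕ → Kernel ℝ ℝ) : ℕ → ℕ → ((ℕ → ℝ) → ℝ≥0∞) → (ℕ → ℝ) → ℝ≥0∞
  | _, 0, f, x => f x
  | i, m + 1, f, x =>
      ∫⁻ y, stepInt κ (i + 1) m f (Function.update x (i + 1) y) ∂(κ i (x i))

/-- The iterated integral
`∫ … ∫ f(x₀,…,xₙ) κ_{n-1}(x_{n-1}; dxₙ) ⋯ κ_0(x₀; dx₁) μ(dx₀)`. -/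
def kiter (μ : Measure ℝ) (κ : ℕ → Kernel ℝ ℝ) (n : ℕ) (f : (ℕ → ℝ) → ℝ≥0∞) : ℝ≥0∞ :=
  ∫⁻ x₀, stepInt κ 0 n f (fun _ => x₀) ∂μ

/-- The sequence of kernels `Q_{∅'A₁}, Q_{A₁, A₁∪A₂}, …, Q_{⋃_{j<n}A_j, ⋃_{j≤n}A_j}`
attached to a consistent ordering `A` by a set-indexed transition system `Q`. -/
def kerSeq (Q : Set T → Set T → Kernel ℝ ℝ) (A : ℕ → Set T) (i : ℕ) : Kernel ℝ ℝ :=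
  Q (if i = 0 then A 0 else Uu A i) (Uu A (i + 1))

/-- The integrand `1_{Γ₀}(y₀) 1_{Γ₁}(y₁) ∏_{i=2}^{n} 1_{Γ_i}(y_{π(i)} - y_{π(i)-1})`. -/
def PermIntegrand (Γ : ℕ → Set ℝ) (π : ℕ → ℕ) (n : ℕ) (y : ℕ → ℝ) : ℝ≥0∞ :=
  (Γ 0).indicator 1 (y 0) * (Γ 1).indicator 1 (y 1) *
    ∏ i ∈ Finset.Icc 2 n, (Γ i).indicator 1 (y (π i) - y (π i - 1))

/-- Assumption 1: the finite dimensional distributions built from `𝒬` over the left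
neighbourhoods of a finite sub-semilattice do not depend on the consistent ordering. -/
def Assumption1 (𝒜 : Set (Set T)) (Q : Set T → Set T → Kernel ℝ ℝ) (μ : Measure ℝ) : Prop :=
  ∀ (L : Finset (Set T)) (n : ℕ) (A A' : ℕ → Set T) (π : Equiv.Perm ℕ),
    IsSubSemilattice 𝒜 L → ConsistentOrdering 𝒜 L n A → ConsistentOrdering 𝒜 L n A' →
    π 1 = 1 → (∀ i, ¬(1 ≤ i ∧ i ≤ n) → π i = i) →
    (∀ i, 1 ≤ i → i ≤ n → A i = A' (π i)) →
    ∀ Γ : ℕ → Set ℝ, (∀ i, MeasurableSet (Γ i)) →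
      kiter μ (kerSeq Q A) n (PermIntegrand Γ id n) =
        kiter μ (kerSeq Q A') n (PermIntegrand Γ π n)

/-- `X` has independent increments. -/
def IndepIncrements (𝒜 : Set (Set T)) (P : Measure Ω) (X : Set T → Ω → ℝ) : Prop :=
  ∀ (n : ℕ) (A B : ℕ → Set T),
    (∀ i < n, A i ∈ 𝒜) → (∀ i < n, B i ∈ Au 𝒜) →
    (∀ i < n, ∀ j < n, i ≠ j → Disjoint (A i \ B i) (A j \ B j)) →
    iIndepFun (m := fun _ : Fin n => (inferInstance : MeasurableSpace ℝ))
      (fun i : Fin n => fun ω => X (A i ∪ B i) ω - X (B i) ω) P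

/-- The trace `X^f` of `X` along the flow `f` is Markov with the one-dimensional
transition system `Qf`. -/
def QMarkovFlow (𝒜 : Set (Set T)) (P : Measure Ω) (X : Set T → Ω → ℝ)
    (a : ℝ) (f : ℝ → Set T) (Qf : ℝ → ℝ → Kernel ℝ ℝ) : Prop :=
  ∀ s t : ℝ, 0 ≤ s → s < t → t ≤ a → ∀ Γ : Set ℝ, MeasurableSet Γ →
    (P[fun ω => Γ.indicator (fun _ => (1 : ℝ)) (X (f t) ω) | filt 𝒜 X (f s)]) =ᵐ[P]
      fun ω => (Qf s t (X (f s) ω) Γ).toReal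

/-- A one-dimensional transition system on the time interval `[0,a]`. -/
def IsFlowTransition (a : ℝ) (Q : ℝ → ℝ → Kernel ℝ ℝ) : Prop :=
  (∀ s t : ℝ, 0 ≤ s → s < t → t ≤ a → IsMarkovKernel (Q s t)) ∧
    ∀ s t u : ℝ, 0 ≤ s → s < t → t < u → u ≤ a →
      ∀ (x : ℝ) (Γ : Set ℝ), MeasurableSet Γ →
        Q s u x Γ = ∫⁻ y, Q t u y Γ ∂(Q s t x)

/-- The simple flow `f` connects the sets of a finite sub-semilattice in the sense of the
consistent ordering `A`, with partition `t` of `[0,a]`. -/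
def Connects (𝒜 : Set (Set T)) (n : ℕ) (A : ℕ → Set T) (a : ℝ) (t : ℕ → ℝ)
    (f : ℝ → Set T) : Prop :=
  t 0 = 0 ∧ t n = a ∧ (∀ i < n, t i < t (i + 1)) ∧
    (∀ i ≤ n, f (t i) = Uu A i) ∧
    ∃ g : ℕ → ℝ → Set T,
      (∀ i < n, ∀ s ∈ Set.Icc (t i) (t (i + 1)), g (i + 1) s ∈ 𝒜) ∧
      (∀ i < n, ∀ s u : ℝ, t i ≤ s → s ≤ u → u ≤ t (i + 1) → g (i + 1) s ⊆ g (i + 1) u) ∧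
      (∀ i < n, g (i + 1) (t i) = A i ∧ g (i + 1) (t (i + 1)) = A (i + 1)) ∧
      (∀ i < n, ∀ s ∈ Set.Icc (t i) (t (i + 1)),
        f s = (⋃ j ∈ Finset.Icc 1 i, A j) ∪ g (i + 1) s)

/-- `ℱ_{∂B} = σ(X_A : A ∈ 𝒜, A ⊆ B, A ⊄ B°)`. -/
def filtBoundary (𝒜 : Set (Set T)) (X : Set T → Ω → ℝ) (B : Set T) : MeasurableSpace Ω :=
  ⨆ A ∈ {A | A ∈ 𝒜 ∧ A ⊆ B ∧ ¬ A ⊆ interior B}, sigOf (X A)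

/-- `ℱ_{B^c} = σ(X_A : A ∈ 𝒜, A ⊄ B)`. -/
def filtComp (𝒜 : Set (Set T)) (X : Set T → Ω → ℝ) (B : Set T) : MeasurableSpace Ω :=
  ⨆ A ∈ {A | A ∈ 𝒜 ∧ ¬ A ⊆ B}, sigOf (X A)

/-- The initial distribution of `X`: the law of `X_{∅'}`. -/
def InitialLaw (P : Measure Ω) (X : Set T → Ω → ℝ) (𝒜 : Set (Set T)) : Measure ℝ :=
  P.map (X (emptyPrime 𝒜))

/-- The measure `Q_{BB'}(x; ·) = F_{B'∖B}(· - x)`, i.e. the law of `X_{B'} - X_B + x`. -/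
def incLaw (P : Measure Ω) (X : Set T → Ω → ℝ) (B B' : Set T) (x : ℝ) : Measure ℝ :=
  P.map fun ω => X B' ω - X B ω + x



section Statement1Aux

open MeasureTheory MeasurableSpace

variable {Ω' : Type*}

private lemma ind_int [mΩ' : MeasurableSpace Ω'] (P : Measure Ω') [IsProbabilityMeasure P]
    {s : Set Ω'} (hs : MeasurableSet s) :
    Integrable (s.indicator fun _ => (1 : ℝ)) P :=
  (integrable_const (1 : ℝ)).indicator hs

private lemma ind_inter_apply (s t : Set Ω') (x : Ω') :
    (s ∩ t).indicator (fun _ => (1 : ℝ)) x =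
      s.indicator (fun _ => (1 : ℝ)) x * t.indicator (fun _ => (1 : ℝ)) x := by
  by_cases hs : x ∈ s <;> by_cases ht : x ∈ t <;>
    simp [Set.indicator_apply, hs, ht]

private lemma ind_bound (s : Set Ω') (x : Ω') :
    ‖s.indicator (fun _ => (1 : ℝ)) x‖ ≤ 1 := by
  by_cases hs : x ∈ s <;> simp [Set.indicator_apply, hs]

private lemma condexp_ind_bound {m mΩ' : MeasurableSpace Ω'} (hm : m ≤ mΩ')
    (P : Measure Ω') [IsProbabilityMeasure P] {s : Set Ω'} (hs : MeasurableSet[mΩ'] s) :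
    ∀ᵐ x ∂P, ‖(P[s.indicator (fun _ => (1 : ℝ))|m]) x‖ ≤ 1 := by
  haveI : IsFiniteMeasure (P.trim hm) := isFiniteMeasure_trim hm
  have h0 : 0 ≤ᵐ[P] P[s.indicator (fun _ => (1 : ℝ))|m] :=
    condExp_nonneg (Filter.Eventually.of_forall fun x =>
      Set.indicator_nonneg (fun _ _ => zero_le_one) x)
  have h1 : P[s.indicator (fun _ => (1 : ℝ))|m] ≤ᵐ[P] P[(fun _ => (1 : ℝ))|m] :=
    condExp_mono (ind_int P hs) (integrable_const 1)
      (Filter.Eventually.of_forall fun x =>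
        Set.indicator_le_self' (fun _ _ => zero_le_one) x)
  have h2 : P[(fun _ => (1 : ℝ))|m] = fun _ => (1 : ℝ) := condExp_const hm 1
  rw [h2] at h1
  filter_upwards [h0, h1] with x hx0 hx1
  simp only [Pi.zero_apply] at hx0
  rw [Real.norm_eq_abs, abs_le]
  exact ⟨by linarith, hx1⟩

/-- Self-adjointness of conditional expectation against a bounded `m`-measurable factor. -/
private lemma integral_mul_condexp {m mΩ' : MeasurableSpace Ω'} (hm : m ≤ mΩ')
    (P : Measure Ω') [IsProbabilityMeasure P] {ψ f : Ω' → ℝ}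
    (hψ : StronglyMeasurable[m] ψ) (hψb : ∀ᵐ x ∂P, ‖ψ x‖ ≤ 1) (hf : Integrable f P) :
    ∫ x, ψ x * f x ∂P = ∫ x, ψ x * (P[f|m]) x ∂P := by
  haveI : IsFiniteMeasure (P.trim hm) := isFiniteMeasure_trim hm
  have hint : Integrable (fun x => ψ x * f x) P :=
    Integrable.bdd_mul hf ((hψ.mono hm).aestronglyMeasurable) hψb
  have h := condExp_mul_of_stronglyMeasurable_left (μ := P) hψ hint hf
  calc ∫ x, ψ x * f x ∂P = ∫ x, (P[fun x => ψ x * f x|m]) x ∂P :=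
        (integral_condExp hm).symm
    _ = ∫ x, ψ x * (P[f|m]) x ∂P := integral_congr_ae h

private lemma setIntegral_eq_ind_mul [mΩ' : MeasurableSpace Ω'] (P : Measure Ω')
    {s : Set Ω'} (hs : MeasurableSet s) (f : Ω' → ℝ) :
    ∫ x in s, f x ∂P = ∫ x, s.indicator (fun _ => (1 : ℝ)) x * f x ∂P := by
  rw [← integral_indicator hs]
  refine integral_congr_ae (Filter.Eventually.of_forall fun x => ?_)
  by_cases hx : x ∈ s <;> simp [Set.indicator_apply, hx]

/-- Identify a conditional expectation through integrals over a generating π-system. -/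
private lemma condexp_eq_of_piSystem {m mΩ' : MeasurableSpace Ω'} (hm : m ≤ mΩ')
    (P : Measure Ω') [IsProbabilityMeasure P] {S : Set (Set Ω')} (hgen : m = generateFrom S) (hpi : IsPiSystem S)
    {f φ : Ω' → ℝ} (hf : Integrable f P) (hφ : Integrable φ P)
    (hφm : AEStronglyMeasurable[m] φ P)
    (htot : ∫ x, φ x ∂P = ∫ x, f x ∂P)
    (hbase : ∀ s ∈ S, ∫ x in s, φ x ∂P = ∫ x in s, f x ∂P) :
    φ =ᵐ[P] P[f|m] := by
  haveI : IsFiniteMeasure (P.trim hm) := isFiniteMeasure_trim hm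
  have key : ∀ ⦃s⦄, MeasurableSet[m] s → ∫ x in s, φ x ∂P = ∫ x in s, f x ∂P := by
    refine MeasurableSpace.induction_on_inter (m := m) hgen hpi (by simp) hbase ?_ ?_
    · intro t htm ht
      have h1 := integral_add_compl (hm _ htm) hφ
      have h2 := integral_add_compl (hm _ htm) hf
      linarith
    · intro u hdisj humeas hu
      rw [integral_iUnion (fun i => hm _ (humeas i)) hdisj hφ.integrableOn,
        integral_iUnion (fun i => hm _ (humeas i)) hdisj hf.integrableOn]
      exact tsum_congr hu
  exact ae_eq_condExp_of_forall_setIntegral_eq hm hf (fun s _ _ => hφ.integrableOn)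
    (fun s hs _ => key hs) hφm

private lemma sup_gen (m1 m2 : MeasurableSpace Ω') :
    m1 ⊔ m2 = generateFrom
      {s | ∃ t1 t2, MeasurableSet[m1] t1 ∧ MeasurableSet[m2] t2 ∧ s = t1 ∩ t2} := by
  apply le_antisymm
  · refine sup_le (fun t ht => ?_) fun t ht => ?_
    · exact measurableSet_generateFrom
        ⟨t, Set.univ, ht, MeasurableSet.univ, (Set.inter_univ t).symm⟩
    · exact measurableSet_generateFrom
        ⟨Set.univ, t, MeasurableSet.univ, ht, (Set.univ_inter t).symm⟩
  · refine generateFrom_le ?_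
    rintro s ⟨t1, t2, h1, h2, rfl⟩
    exact ((le_sup_left : m1 ≤ m1 ⊔ m2) _ h1).inter ((le_sup_right : m2 ≤ m1 ⊔ m2) _ h2)

private lemma sup_pi (m1 m2 : MeasurableSpace Ω') :
    IsPiSystem {s | ∃ t1 t2, MeasurableSet[m1] t1 ∧ MeasurableSet[m2] t2 ∧ s = t1 ∩ t2} := by
  rintro s ⟨a, b, ha, hb, rfl⟩ t ⟨c, d, hc, hd, rfl⟩ -
  exact ⟨a ∩ c, b ∩ d, ha.inter hc, hb.inter hd, by ext x; simp only [Set.mem_inter_iff]; tauto⟩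

private lemma sup_gen₃ (m1 m2 m3 : MeasurableSpace Ω') :
    m1 ⊔ m2 ⊔ m3 = generateFrom
      {s | ∃ t1 t2 t3, MeasurableSet[m1] t1 ∧ MeasurableSet[m2] t2 ∧ MeasurableSet[m3] t3 ∧
        s = t1 ∩ t2 ∩ t3} := by
  apply le_antisymm
  · refine sup_le (sup_le (fun t ht => ?_) fun t ht => ?_) fun t ht => ?_
    · exact measurableSet_generateFrom ⟨t, Set.univ, Set.univ, ht, MeasurableSet.univ,
        MeasurableSet.univ, by simp⟩
    · exact measurableSet_generateFrom ⟨Set.univ, t, Set.univ, MeasurableSet.univ, ht,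
        MeasurableSet.univ, by simp⟩
    · exact measurableSet_generateFrom ⟨Set.univ, Set.univ, t, MeasurableSet.univ,
        MeasurableSet.univ, ht, by simp⟩
  · refine generateFrom_le ?_
    rintro s ⟨t1, t2, t3, h1, h2, h3, rfl⟩
    exact (((le_sup_left.trans le_sup_left : m1 ≤ m1 ⊔ m2 ⊔ m3) _ h1).inter
      ((le_sup_right.trans le_sup_left : m2 ≤ m1 ⊔ m2 ⊔ m3) _ h2)).inter
      ((le_sup_right : m3 ≤ m1 ⊔ m2 ⊔ m3) _ h3)

private lemma sup_pi₃ (m1 m2 m3 : MeasurableSpace Ω') :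
    IsPiSystem {s | ∃ t1 t2 t3, MeasurableSet[m1] t1 ∧ MeasurableSet[m2] t2 ∧
      MeasurableSet[m3] t3 ∧ s = t1 ∩ t2 ∩ t3} := by
  rintro s ⟨a, b, c, ha, hb, hc, rfl⟩ t ⟨d, e, f, hd, he, hf, rfl⟩ -
  exact ⟨a ∩ d, b ∩ e, c ∩ f, ha.inter hd, hb.inter he, hc.inter hf,
    by ext x; simp only [Set.mem_inter_iff]; tauto⟩

end Statement1Aux

/-- Lemma 4: if `ℱ₁ ⟂ ℱ₃ | ℱ₂` and `ℱ₁ ∨ ℱ₂ ⟂ ℱ₄ | ℱ₃`, then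
`ℱ₁ ⟂ ℱ₃ ∨ ℱ₄ | ℱ₂`. -/
theorem statement1 {Ω : Type*} [mΩ : MeasurableSpace Ω] (P : Measure Ω)
    [IsProbabilityMeasure P] (F1 F2 F3 F4 : MeasurableSpace Ω)
    (h1 : F1 ≤ mΩ) (h2 : F2 ≤ mΩ) (h3 : F3 ≤ mΩ) (h4 : F4 ≤ mΩ)
    (hA : CondIndepGiven (mΩ := mΩ) P F1 F3 F2)
    (hB : CondIndepGiven (mΩ := mΩ) P (F1 ⊔ F2) F4 F3) :
    CondIndepGiven (mΩ := mΩ) P F1 (F3 ⊔ F4) F2 := by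
  have h23 : F2 ⊔ F3 ≤ mΩ := sup_le h2 h3
  have h234 : F2 ⊔ F3 ⊔ F4 ≤ mΩ := sup_le h23 h4
  have h34 : F3 ⊔ F4 ≤ mΩ := sup_le h3 h4
  haveI i2 : IsFiniteMeasure (P.trim h2) := isFiniteMeasure_trim h2
  haveI i3 : IsFiniteMeasure (P.trim h3) := isFiniteMeasure_trim h3
  haveI i23 : IsFiniteMeasure (P.trim h23) := isFiniteMeasure_trim h23
  haveI i234 : IsFiniteMeasure (P.trim h234) := isFiniteMeasure_trim h234
  intro g h hg hh
  have hgm : MeasurableSet[mΩ] g := h1 g hg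
  have hhm : MeasurableSet[mΩ] h := h34 h hh
  -- Lemma A : for d ∈ F4, P[1_d | F2 ⊔ F3] = P[1_d | F3] a.e.
  have lemA : ∀ d : Set Ω, MeasurableSet[F4] d →
      (P[d.indicator (fun _ => (1 : ℝ))|F2 ⊔ F3]) =ᵐ[P]
        (P[d.indicator (fun _ => (1 : ℝ))|F3]) := by
    intro d hd
    have hdm : MeasurableSet[mΩ] d := h4 d hd
    refine (condexp_eq_of_piSystem (m := F2 ⊔ F3) h23 P (sup_gen F2 F3) (sup_pi F2 F3)
        (ind_int (mΩ' := mΩ) P hdm) integrable_condExp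
        (((stronglyMeasurable_condExp (m := F3) (μ := P) (f := d.indicator (fun _ => (1 : ℝ)))).mono (le_sup_right : F3 ≤ F2 ⊔ F3)).aestronglyMeasurable)
        (integral_condExp h3) ?_).symm
    rintro s ⟨b, c, hb, hc, rfl⟩
    have hbm : MeasurableSet[mΩ] b := h2 b hb
    have hcm : MeasurableSet[mΩ] c := h3 c hc
    have hψ : StronglyMeasurable[F3] fun x =>
        c.indicator (fun _ => (1 : ℝ)) x * (P[d.indicator (fun _ => (1 : ℝ))|F3]) x :=
      (stronglyMeasurable_const.indicator hc).mul stronglyMeasurable_condExp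
    have hψb : ∀ᵐ x ∂P, ‖c.indicator (fun _ => (1 : ℝ)) x *
        (P[d.indicator (fun _ => (1 : ℝ))|F3]) x‖ ≤ 1 := by
      filter_upwards [condexp_ind_bound h3 P hdm] with x hx
      rw [norm_mul]
      nlinarith [ind_bound c x, norm_nonneg (c.indicator (fun _ => (1 : ℝ)) x),
        norm_nonneg ((P[d.indicator (fun _ => (1 : ℝ))|F3]) x)]
    symm
    calc ∫ x in b ∩ c, d.indicator (fun _ => (1 : ℝ)) x ∂P
        = ∫ x, (b ∩ c).indicator (fun _ => (1 : ℝ)) x * d.indicator (fun _ => (1 : ℝ)) x ∂P :=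
          setIntegral_eq_ind_mul (mΩ' := mΩ) P (hbm.inter hcm) _
      _ = ∫ x, c.indicator (fun _ => (1 : ℝ)) x * (b ∩ d).indicator (fun _ => (1 : ℝ)) x ∂P :=
          integral_congr_ae (Filter.Eventually.of_forall fun x => by
            simp only [ind_inter_apply]; ring)
      _ = ∫ x, c.indicator (fun _ => (1 : ℝ)) x *
            (P[(b ∩ d).indicator (fun _ => (1 : ℝ))|F3]) x ∂P :=
          integral_mul_condexp h3 P (stronglyMeasurable_const.indicator hc)
            (Filter.Eventually.of_forall (ind_bound c)) (ind_int (mΩ' := mΩ) P (hbm.inter hdm))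
      _ = ∫ x, (c.indicator (fun _ => (1 : ℝ)) x * (P[d.indicator (fun _ => (1 : ℝ))|F3]) x) *
            (P[b.indicator (fun _ => (1 : ℝ))|F3]) x ∂P := by
          refine integral_congr_ae ?_
          filter_upwards [hB b d ((le_sup_right : F2 ≤ F1 ⊔ F2) b hb) hd] with x hx
          rw [hx]; ring
      _ = ∫ x, (c.indicator (fun _ => (1 : ℝ)) x * (P[d.indicator (fun _ => (1 : ℝ))|F3]) x) *
            b.indicator (fun _ => (1 : ℝ)) x ∂P :=
          (integral_mul_condexp h3 P hψ hψb (ind_int (mΩ' := mΩ) P hbm)).symm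
      _ = ∫ x, (b ∩ c).indicator (fun _ => (1 : ℝ)) x *
            (P[d.indicator (fun _ => (1 : ℝ))|F3]) x ∂P :=
          integral_congr_ae (Filter.Eventually.of_forall fun x => by
            simp only [ind_inter_apply]; ring)
      _ = ∫ x in b ∩ c, (P[d.indicator (fun _ => (1 : ℝ))|F3]) x ∂P :=
          (setIntegral_eq_ind_mul (mΩ' := mΩ) P (hbm.inter hcm) _).symm
  -- Lemma B : P[1_g | F2 ⊔ F3] = P[1_g | F2] a.e.
  have lemB : (P[g.indicator (fun _ => (1 : ℝ))|F2 ⊔ F3]) =ᵐ[P]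
      (P[g.indicator (fun _ => (1 : ℝ))|F2]) := by
    refine (condexp_eq_of_piSystem (m := F2 ⊔ F3) h23 P (sup_gen F2 F3) (sup_pi F2 F3)
        (ind_int (mΩ' := mΩ) P hgm) integrable_condExp
        (((stronglyMeasurable_condExp (m := F2) (μ := P) (f := g.indicator (fun _ => (1 : ℝ)))).mono (le_sup_left : F2 ≤ F2 ⊔ F3)).aestronglyMeasurable)
        (integral_condExp h2) ?_).symm
    rintro s ⟨b, c, hb, hc, rfl⟩
    have hbm : MeasurableSet[mΩ] b := h2 b hb
    have hcm : MeasurableSet[mΩ] c := h3 c hc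
    have hψ : StronglyMeasurable[F2] fun x =>
        b.indicator (fun _ => (1 : ℝ)) x * (P[g.indicator (fun _ => (1 : ℝ))|F2]) x :=
      (stronglyMeasurable_const.indicator hb).mul stronglyMeasurable_condExp
    have hψb : ∀ᵐ x ∂P, ‖b.indicator (fun _ => (1 : ℝ)) x *
        (P[g.indicator (fun _ => (1 : ℝ))|F2]) x‖ ≤ 1 := by
      filter_upwards [condexp_ind_bound h2 P hgm] with x hx
      rw [norm_mul]
      nlinarith [ind_bound b x, norm_nonneg (b.indicator (fun _ => (1 : ℝ)) x),
        norm_nonneg ((P[g.indicator (fun _ => (1 : ℝ))|F2]) x)]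
    symm
    calc ∫ x in b ∩ c, g.indicator (fun _ => (1 : ℝ)) x ∂P
        = ∫ x, (b ∩ c).indicator (fun _ => (1 : ℝ)) x * g.indicator (fun _ => (1 : ℝ)) x ∂P :=
          setIntegral_eq_ind_mul (mΩ' := mΩ) P (hbm.inter hcm) _
      _ = ∫ x, b.indicator (fun _ => (1 : ℝ)) x * (g ∩ c).indicator (fun _ => (1 : ℝ)) x ∂P :=
          integral_congr_ae (Filter.Eventually.of_forall fun x => by
            simp only [ind_inter_apply]; ring)
      _ = ∫ x, b.indicator (fun _ => (1 : ℝ)) x *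
            (P[(g ∩ c).indicator (fun _ => (1 : ℝ))|F2]) x ∂P :=
          integral_mul_condexp h2 P (stronglyMeasurable_const.indicator hb)
            (Filter.Eventually.of_forall (ind_bound b)) (ind_int (mΩ' := mΩ) P (hgm.inter hcm))
      _ = ∫ x, (b.indicator (fun _ => (1 : ℝ)) x * (P[g.indicator (fun _ => (1 : ℝ))|F2]) x) *
            (P[c.indicator (fun _ => (1 : ℝ))|F2]) x ∂P := by
          refine integral_congr_ae ?_
          filter_upwards [hA g c hg hc] with x hx
          rw [hx]; ring
      _ = ∫ x, (b.indicator (fun _ => (1 : ℝ)) x * (P[g.indicator (fun _ => (1 : ℝ))|F2]) x) *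
            c.indicator (fun _ => (1 : ℝ)) x ∂P :=
          (integral_mul_condexp h2 P hψ hψb (ind_int (mΩ' := mΩ) P hcm)).symm
      _ = ∫ x, (b ∩ c).indicator (fun _ => (1 : ℝ)) x *
            (P[g.indicator (fun _ => (1 : ℝ))|F2]) x ∂P :=
          integral_congr_ae (Filter.Eventually.of_forall fun x => by
            simp only [ind_inter_apply]; ring)
      _ = ∫ x in b ∩ c, (P[g.indicator (fun _ => (1 : ℝ))|F2]) x ∂P :=
          (setIntegral_eq_ind_mul (mΩ' := mΩ) P (hbm.inter hcm) _).symm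
  -- Main claim : P[1_g | F2 ⊔ F3 ⊔ F4] = P[1_g | F2] a.e.
  have lemM : (P[g.indicator (fun _ => (1 : ℝ))|F2 ⊔ F3 ⊔ F4]) =ᵐ[P]
      (P[g.indicator (fun _ => (1 : ℝ))|F2]) := by
    refine (condexp_eq_of_piSystem (m := F2 ⊔ F3 ⊔ F4) h234 P (sup_gen₃ F2 F3 F4)
        (sup_pi₃ F2 F3 F4) (ind_int (mΩ' := mΩ) P hgm) integrable_condExp
        (((stronglyMeasurable_condExp (m := F2) (μ := P) (f := g.indicator (fun _ => (1 : ℝ)))).mono (le_sup_left.trans le_sup_left : F2 ≤ F2 ⊔ F3 ⊔ F4)).aestronglyMeasurable)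
        (integral_condExp h2) ?_).symm
    rintro s ⟨b, c, d, hb, hc, hd, rfl⟩
    have hbm : MeasurableSet[mΩ] b := h2 b hb
    have hcm : MeasurableSet[mΩ] c := h3 c hc
    have hdm : MeasurableSet[mΩ] d := h4 d hd
    have hgb : MeasurableSet[F1 ⊔ F2] (g ∩ b) :=
      ((le_sup_left : F1 ≤ F1 ⊔ F2) g hg).inter ((le_sup_right : F2 ≤ F1 ⊔ F2) b hb)
    have hψ2 : StronglyMeasurable[F3] fun x =>
        c.indicator (fun _ => (1 : ℝ)) x * (P[d.indicator (fun _ => (1 : ℝ))|F3]) x :=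
      (stronglyMeasurable_const.indicator hc).mul stronglyMeasurable_condExp
    have hψ2b : ∀ᵐ x ∂P, ‖c.indicator (fun _ => (1 : ℝ)) x *
        (P[d.indicator (fun _ => (1 : ℝ))|F3]) x‖ ≤ 1 := by
      filter_upwards [condexp_ind_bound h3 P hdm] with x hx
      rw [norm_mul]
      nlinarith [ind_bound c x, norm_nonneg (c.indicator (fun _ => (1 : ℝ)) x),
        norm_nonneg ((P[d.indicator (fun _ => (1 : ℝ))|F3]) x)]
    have hψ : StronglyMeasurable[F2 ⊔ F3] fun x => b.indicator (fun _ => (1 : ℝ)) x *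
        (c.indicator (fun _ => (1 : ℝ)) x * (P[d.indicator (fun _ => (1 : ℝ))|F3]) x) := by
      have hb' : StronglyMeasurable[F2 ⊔ F3] (b.indicator (fun _ => (1 : ℝ))) :=
        (stronglyMeasurable_const.indicator hb).mono (le_sup_left : F2 ≤ F2 ⊔ F3)
      have h2' : StronglyMeasurable[F2 ⊔ F3] fun x => c.indicator (fun _ => (1 : ℝ)) x *
          (P[d.indicator (fun _ => (1 : ℝ))|F3]) x :=
        hψ2.mono (le_sup_right : F3 ≤ F2 ⊔ F3)
      exact hb'.mul h2' 
    have hψb : ∀ᵐ x ∂P, ‖b.indicator (fun _ => (1 : ℝ)) x *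
        (c.indicator (fun _ => (1 : ℝ)) x * (P[d.indicator (fun _ => (1 : ℝ))|F3]) x)‖ ≤ 1 := by
      filter_upwards [hψ2b] with x hx
      rw [norm_mul]
      nlinarith [ind_bound b x, norm_nonneg (b.indicator (fun _ => (1 : ℝ)) x),
        norm_nonneg (c.indicator (fun _ => (1 : ℝ)) x *
          (P[d.indicator (fun _ => (1 : ℝ))|F3]) x)]
    have hψ' : StronglyMeasurable[F2 ⊔ F3] fun x => b.indicator (fun _ => (1 : ℝ)) x *
        (c.indicator (fun _ => (1 : ℝ)) x * (P[g.indicator (fun _ => (1 : ℝ))|F2]) x) := by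
      have hb' : StronglyMeasurable[F2 ⊔ F3] (b.indicator (fun _ => (1 : ℝ))) :=
        (stronglyMeasurable_const.indicator hb).mono (le_sup_left : F2 ≤ F2 ⊔ F3)
      have hc' : StronglyMeasurable[F2 ⊔ F3] (c.indicator (fun _ => (1 : ℝ))) :=
        (stronglyMeasurable_const.indicator hc).mono (le_sup_right : F3 ≤ F2 ⊔ F3)
      have hq' : StronglyMeasurable[F2 ⊔ F3] (P[g.indicator (fun _ => (1 : ℝ))|F2]) :=
        stronglyMeasurable_condExp.mono (le_sup_left : F2 ≤ F2 ⊔ F3)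
      exact hb'.mul (hc'.mul hq')
    have hψ'b : ∀ᵐ x ∂P, ‖b.indicator (fun _ => (1 : ℝ)) x *
        (c.indicator (fun _ => (1 : ℝ)) x * (P[g.indicator (fun _ => (1 : ℝ))|F2]) x)‖ ≤ 1 := by
      filter_upwards [condexp_ind_bound h2 P hgm] with x hx
      rw [norm_mul, norm_mul]
      have hcq : ‖c.indicator (fun _ => (1 : ℝ)) x‖ *
          ‖(P[g.indicator (fun _ => (1 : ℝ))|F2]) x‖ ≤ 1 := by
        nlinarith [ind_bound c x, norm_nonneg (c.indicator (fun _ => (1 : ℝ)) x),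
          norm_nonneg ((P[g.indicator (fun _ => (1 : ℝ))|F2]) x)]
      have hcq0 : 0 ≤ ‖c.indicator (fun _ => (1 : ℝ)) x‖ *
          ‖(P[g.indicator (fun _ => (1 : ℝ))|F2]) x‖ :=
        mul_nonneg (norm_nonneg _) (norm_nonneg _)
      nlinarith [ind_bound b x, norm_nonneg (b.indicator (fun _ => (1 : ℝ)) x)]
    have Lchain : ∫ x in b ∩ c ∩ d, g.indicator (fun _ => (1 : ℝ)) x ∂P =
        ∫ x, (fun y => b.indicator (fun _ => (1 : ℝ)) y *
          (c.indicator (fun _ => (1 : ℝ)) y * (P[d.indicator (fun _ => (1 : ℝ))|F3]) y)) x *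
          (P[g.indicator (fun _ => (1 : ℝ))|F2]) x ∂P := by
      calc ∫ x in b ∩ c ∩ d, g.indicator (fun _ => (1 : ℝ)) x ∂P
          = ∫ x, (b ∩ c ∩ d).indicator (fun _ => (1 : ℝ)) x *
              g.indicator (fun _ => (1 : ℝ)) x ∂P :=
            setIntegral_eq_ind_mul (mΩ' := mΩ) P ((hbm.inter hcm).inter hdm) _
        _ = ∫ x, c.indicator (fun _ => (1 : ℝ)) x *
              ((g ∩ b) ∩ d).indicator (fun _ => (1 : ℝ)) x ∂P :=
            integral_congr_ae (Filter.Eventually.of_forall fun x => by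
              simp only [ind_inter_apply]; ring)
        _ = ∫ x, c.indicator (fun _ => (1 : ℝ)) x *
              (P[((g ∩ b) ∩ d).indicator (fun _ => (1 : ℝ))|F3]) x ∂P :=
            integral_mul_condexp h3 P (stronglyMeasurable_const.indicator hc)
              (Filter.Eventually.of_forall (ind_bound c))
              (ind_int (mΩ' := mΩ) P ((hgm.inter hbm).inter hdm))
        _ = ∫ x, (c.indicator (fun _ => (1 : ℝ)) x * (P[d.indicator (fun _ => (1 : ℝ))|F3]) x) *
              (P[(g ∩ b).indicator (fun _ => (1 : ℝ))|F3]) x ∂P := by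
            refine integral_congr_ae ?_
            filter_upwards [hB (g ∩ b) d hgb hd] with x hx
            rw [hx]; ring
        _ = ∫ x, (c.indicator (fun _ => (1 : ℝ)) x * (P[d.indicator (fun _ => (1 : ℝ))|F3]) x) *
              (g ∩ b).indicator (fun _ => (1 : ℝ)) x ∂P :=
            (integral_mul_condexp h3 P hψ2 hψ2b
              (ind_int (mΩ' := mΩ) P (hgm.inter hbm))).symm
        _ = ∫ x, (fun y => b.indicator (fun _ => (1 : ℝ)) y *
              (c.indicator (fun _ => (1 : ℝ)) y * (P[d.indicator (fun _ => (1 : ℝ))|F3]) y)) x *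
              g.indicator (fun _ => (1 : ℝ)) x ∂P :=
            integral_congr_ae (Filter.Eventually.of_forall fun x => by
              simp only [ind_inter_apply]; ring)
        _ = ∫ x, (fun y => b.indicator (fun _ => (1 : ℝ)) y *
              (c.indicator (fun _ => (1 : ℝ)) y * (P[d.indicator (fun _ => (1 : ℝ))|F3]) y)) x *
              (P[g.indicator (fun _ => (1 : ℝ))|F2 ⊔ F3]) x ∂P :=
            integral_mul_condexp h23 P hψ hψb (ind_int (mΩ' := mΩ) P hgm)
        _ = ∫ x, (fun y => b.indicator (fun _ => (1 : ℝ)) y *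
              (c.indicator (fun _ => (1 : ℝ)) y * (P[d.indicator (fun _ => (1 : ℝ))|F3]) y)) x *
              (P[g.indicator (fun _ => (1 : ℝ))|F2]) x ∂P := by
            refine integral_congr_ae ?_
            filter_upwards [lemB] with x hx
            rw [hx]
    have Rchain : ∫ x in b ∩ c ∩ d, (P[g.indicator (fun _ => (1 : ℝ))|F2]) x ∂P =
        ∫ x, (fun y => b.indicator (fun _ => (1 : ℝ)) y *
          (c.indicator (fun _ => (1 : ℝ)) y * (P[d.indicator (fun _ => (1 : ℝ))|F3]) y)) x *
          (P[g.indicator (fun _ => (1 : ℝ))|F2]) x ∂P := by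
      calc ∫ x in b ∩ c ∩ d, (P[g.indicator (fun _ => (1 : ℝ))|F2]) x ∂P
          = ∫ x, (b ∩ c ∩ d).indicator (fun _ => (1 : ℝ)) x *
              (P[g.indicator (fun _ => (1 : ℝ))|F2]) x ∂P :=
            setIntegral_eq_ind_mul (mΩ' := mΩ) P ((hbm.inter hcm).inter hdm) _
        _ = ∫ x, (fun y => b.indicator (fun _ => (1 : ℝ)) y *
              (c.indicator (fun _ => (1 : ℝ)) y * (P[g.indicator (fun _ => (1 : ℝ))|F2]) y)) x *
              d.indicator (fun _ => (1 : ℝ)) x ∂P :=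
            integral_congr_ae (Filter.Eventually.of_forall fun x => by
              simp only [ind_inter_apply]; ring)
        _ = ∫ x, (fun y => b.indicator (fun _ => (1 : ℝ)) y *
              (c.indicator (fun _ => (1 : ℝ)) y * (P[g.indicator (fun _ => (1 : ℝ))|F2]) y)) x *
              (P[d.indicator (fun _ => (1 : ℝ))|F2 ⊔ F3]) x ∂P :=
            integral_mul_condexp h23 P hψ' hψ'b (ind_int (mΩ' := mΩ) P hdm)
        _ = ∫ x, (fun y => b.indicator (fun _ => (1 : ℝ)) y *
              (c.indicator (fun _ => (1 : ℝ)) y * (P[d.indicator (fun _ => (1 : ℝ))|F3]) y)) x *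
              (P[g.indicator (fun _ => (1 : ℝ))|F2]) x ∂P := by
            refine integral_congr_ae ?_
            filter_upwards [lemA d hd] with x hx
            rw [hx]; ring
    rw [Lchain, Rchain]
  -- Conclusion
  have hle2 : F2 ≤ F2 ⊔ F3 ⊔ F4 := le_sup_left.trans le_sup_left
  have hh' : MeasurableSet[F2 ⊔ F3 ⊔ F4] h :=
    (sup_le ((le_sup_right : F3 ≤ F2 ⊔ F3).trans le_sup_left)
      (le_sup_right : F4 ≤ F2 ⊔ F3 ⊔ F4) : F3 ⊔ F4 ≤ F2 ⊔ F3 ⊔ F4) h hh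
  have e1 : (g ∩ h).indicator (fun _ => (1 : ℝ)) =
      (h.indicator (fun _ => (1 : ℝ))) * (g.indicator (fun _ => (1 : ℝ))) := by
    funext x
    rw [Pi.mul_apply, ind_inter_apply]
    ring
  have hint1 : Integrable ((h.indicator (fun _ => (1 : ℝ))) *
      (g.indicator (fun _ => (1 : ℝ)))) P :=
    Integrable.bdd_mul (c := 1) (ind_int (mΩ' := mΩ) P hgm)
      ((stronglyMeasurable_const.indicator hhm).aestronglyMeasurable)
      (Filter.Eventually.of_forall (ind_bound h))
  have m1 := condExp_mul_of_stronglyMeasurable_left (μ := P) (m := F2 ⊔ F3 ⊔ F4)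
    (stronglyMeasurable_const.indicator hh') hint1 (ind_int (mΩ' := mΩ) P hgm)
  have t1 : (P[(g ∩ h).indicator (fun _ => (1 : ℝ))|F2]) =ᵐ[P]
      (P[(P[(g ∩ h).indicator (fun _ => (1 : ℝ))|F2 ⊔ F3 ⊔ F4])|F2]) :=
    (condExp_condExp_of_le hle2 h234).symm
  have t2 : (P[(g ∩ h).indicator (fun _ => (1 : ℝ))|F2 ⊔ F3 ⊔ F4]) =ᵐ[P]
      fun x => h.indicator (fun _ => (1 : ℝ)) x * (P[g.indicator (fun _ => (1 : ℝ))|F2]) x := by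
    rw [e1]
    filter_upwards [m1, lemM] with x hx1 hx2
    rw [hx1, Pi.mul_apply, hx2]
  have t3 := condExp_congr_ae (m := F2) (μ := P) t2
  have e2 : (fun x => h.indicator (fun _ => (1 : ℝ)) x *
      (P[g.indicator (fun _ => (1 : ℝ))|F2]) x) =
      (P[g.indicator (fun _ => (1 : ℝ))|F2]) * (h.indicator (fun _ => (1 : ℝ))) := by
    funext x
    rw [Pi.mul_apply]
    ring
  have hint2 : Integrable ((P[g.indicator (fun _ => (1 : ℝ))|F2]) *
      (h.indicator (fun _ => (1 : ℝ)))) P :=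
    Integrable.bdd_mul (c := 1) (ind_int (mΩ' := mΩ) P hhm)
      ((stronglyMeasurable_condExp.mono h2).aestronglyMeasurable)
      (condexp_ind_bound h2 P hgm)
  have m3 := condExp_mul_of_stronglyMeasurable_left (μ := P) (m := F2)
    (stronglyMeasurable_condExp (m := F2)) hint2 (ind_int (mΩ' := mΩ) P hhm)
  have t4 : (P[(fun x => h.indicator (fun _ => (1 : ℝ)) x *
      (P[g.indicator (fun _ => (1 : ℝ))|F2]) x)|F2]) =ᵐ[P]
      fun ω => (P[g.indicator (fun _ => (1 : ℝ))|F2]) ω *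
        (P[h.indicator (fun _ => (1 : ℝ))|F2]) ω := by
    rw [e2]
    exact m3
  exact t1.trans (t3.trans t4)

end SetIndexedMarkov
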